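/- Let σ ⊆ ℝ^m be a closed convex polyhedral cone and σ∨ its dual cone. Then the map sending a face τ of σ to τ* := σ∨ ∩ τ^⊥ is an inclusion-reversing bijection between the faces of σ and the faces of σ∨. -/

import Mathlib

/-!
STATEMENT 0: For a closed convex polyhedral cone σ ⊆ ℝ^m, the map τ ↦ τ* := σ∨ ∩ τ^⊥
is an inclusion-reversing bijection between the faces of σ and the faces of the dual
cone σ∨.
-/

/-- A polyhedral cone: the set of nonnegative combinations of a finite set of vectors. -/
def IsPolyhedralCone {m : ℕ} (σ : Set (EuclideanSpace ℝ (Fin m))) : Prop :=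
  ∃ s : Finset (EuclideanSpace ℝ (Fin m)),
    σ = {x | ∃ c : EuclideanSpace ℝ (Fin m) → ℝ,
      (∀ v ∈ s, 0 ≤ c v) ∧ x = ∑ v ∈ s, c v • v}

/-- The dual cone of σ (identifying (ℝ^m)* with ℝ^m via the inner product). -/
def dualCone {m : ℕ} (σ : Set (EuclideanSpace ℝ (Fin m))) : Set (EuclideanSpace ℝ (Fin m)) :=
  {y | ∀ x ∈ σ, 0 ≤ (inner ℝ x y : ℝ)}

/-- τ^⊥: the set of linear functionals (vectors) vanishing on τ. -/
def perpSet {m : ℕ} (τ : Set (EuclideanSpace ℝ (Fin m))) : Set (EuclideanSpace ℝ (Fin m)) :=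
  {y | ∀ x ∈ τ, (inner ℝ x y : ℝ) = 0}

/-- A face of a cone: the cone itself, or its intersection with a supporting hyperplane. -/
def IsFaceOf {m : ℕ} (F σ : Set (EuclideanSpace ℝ (Fin m))) : Prop :=
  F = σ ∨ ∃ y : EuclideanSpace ℝ (Fin m),
    (∀ x ∈ σ, 0 ≤ (inner ℝ y x : ℝ)) ∧ F = σ ∩ {x | (inner ℝ y x : ℝ) = 0}

set_option linter.unusedSectionVars false
set_option maxHeartbeats 1000000
open RealInnerProductSpace


section General
variable {E : Type*} [NormedAddCommGroup E] [InnerProductSpace ℝ E] [FiniteDimensional ℝ E]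

def coneOf (s : Finset E) : Set E :=
  {x | ∃ c : E → ℝ, (∀ v ∈ s, 0 ≤ c v) ∧ x = ∑ v ∈ s, c v • v}

lemma zero_mem_coneOf (s : Finset E) : (0 : E) ∈ coneOf s :=
  ⟨fun _ => 0, fun _ _ => le_refl 0, by simp⟩

lemma coneOf_mono {T s : Finset E} (h : T ⊆ s) : coneOf T ⊆ coneOf s := by
  classical
  rintro x ⟨c, hc, rfl⟩
  refine ⟨fun v => if v ∈ T then c v else 0, fun v hv => ?_, ?_⟩ <;> dsimp only
  · split
    · exact hc _ ‹_›
    · exact le_refl 0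
  · rw [← Finset.sum_subset h (fun v _ hvT => by simp [hvT])]
    exact Finset.sum_congr rfl fun v hv => by simp [hv]

lemma mem_coneOf_self {s : Finset E} {v : E} (hv : v ∈ s) : v ∈ coneOf s := by
  classical
  refine ⟨fun w => if w = v then 1 else 0, fun w _ => ?_, ?_⟩ <;> dsimp only
  · split <;> norm_num
  · rw [Finset.sum_congr rfl
      (fun w _ => by rw [ite_smul, one_smul, zero_smul] :
        ∀ w ∈ s, (if w = v then (1:ℝ) else 0) • w = if w = v then w else 0)]
    simp [Finset.sum_ite_eq' s v (fun w => w), hv]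

lemma sum_mem_coneOf {s : Finset E} : (∑ v ∈ s, v) ∈ coneOf s :=
  ⟨fun _ => 1, fun _ _ => zero_le_one, by simp⟩

/-- The cone of a finite set as a `ConvexCone`. -/
def coneOfCC (s : Finset E) : ConvexCone ℝ E where
  carrier := coneOf s
  smul_mem' := by
    rintro r hr x ⟨c, hc, rfl⟩
    exact ⟨fun v => r * c v, fun v hv => mul_nonneg hr.le (hc v hv),
      by rw [Finset.smul_sum]; exact Finset.sum_congr rfl fun v _ => by rw [smul_smul]⟩
  add_mem' := by
    rintro x ⟨c, hc, rfl⟩ y ⟨c', hc', rfl⟩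
    exact ⟨fun v => c v + c' v, fun v hv => add_nonneg (hc v hv) (hc' v hv),
      by rw [← Finset.sum_add_distrib]; exact Finset.sum_congr rfl fun v _ => by rw [add_smul]⟩

lemma coneOf_caratheodory (s : Finset E) (c : E → ℝ) (hc : ∀ v ∈ s, 0 ≤ c v) :
    ∃ T : Finset E, T ⊆ s ∧ LinearIndependent ℝ (fun v : T => (v : E)) ∧
      (∑ v ∈ s, c v • v) ∈ coneOf T := by
  classical
  induction s using Finset.strongInduction generalizing c with
  | _ s ih =>
  by_cases hli : LinearIndependent ℝ (fun v : s => (v : E))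
  · exact ⟨s, Finset.Subset.refl s, hli, c, hc, rfl⟩
  · obtain ⟨g, hg0, i₀, hi₀⟩ := Fintype.not_linearIndependent_iff.1 hli
    set d : E → ℝ := fun v => if h : v ∈ s then g ⟨v, h⟩ else 0 with hd
    have hdsum : ∑ v ∈ s, d v • v = 0 := by
      rw [← hg0, ← Finset.sum_attach s (fun v => d v • v)]
      exact Finset.sum_congr rfl fun i _ => by simp [hd, i.2]
    have hex : ∃ d' : E → ℝ, (∑ v ∈ s, d' v • v = 0) ∧ ∃ v ∈ s, 0 < d' v := by
      rcases lt_or_gt_of_ne hi₀ with h | h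
      · refine ⟨fun v => -d v, ?_, i₀, i₀.2, ?_⟩
        · have := congrArg Neg.neg hdsum
          simp only [neg_zero] at this
          rw [← this, ← Finset.sum_neg_distrib]
          exact Finset.sum_congr rfl fun v _ => by rw [neg_smul]
        · have : d i₀ = g i₀ := by simp [hd, i₀.2]
          dsimp only; rw [this]; linarith
      · refine ⟨d, hdsum, i₀, i₀.2, ?_⟩
        have : d i₀ = g i₀ := by simp [hd, i₀.2]
        rw [this]; linarith
    obtain ⟨d', hd'sum, hd'pos⟩ := hex
    set P := s.filter (fun v => 0 < d' v) with hP
    have hPne : P.Nonempty := by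
      obtain ⟨v, hv, hvpos⟩ := hd'pos
      exact ⟨v, Finset.mem_filter.2 ⟨hv, hvpos⟩⟩
    obtain ⟨v₁, hv₁P, hv₁min⟩ := Finset.exists_min_image P (fun v => c v / d' v) hPne
    have hv₁s : v₁ ∈ s := (Finset.mem_filter.1 hv₁P).1
    have hd'v₁ : 0 < d' v₁ := (Finset.mem_filter.1 hv₁P).2
    set r := c v₁ / d' v₁ with hr
    have hr0 : 0 ≤ r := div_nonneg (hc v₁ hv₁s) hd'v₁.le
    set c' : E → ℝ := fun v => c v - r * d' v with hc'
    have hc'nonneg : ∀ v ∈ s, 0 ≤ c' v := by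
      intro v hv
      by_cases hdv : 0 < d' v
      · have := hv₁min v (Finset.mem_filter.2 ⟨hv, hdv⟩)
        have : r * d' v ≤ c v := by
          rw [hr]
          calc c v₁ / d' v₁ * d' v ≤ c v / d' v * d' v := by
                exact mul_le_mul_of_nonneg_right this hdv.le
            _ = c v := div_mul_cancel₀ _ hdv.ne'
        simp [hc']; linarith
      · push_neg at hdv
        have : r * d' v ≤ 0 := mul_nonpos_of_nonneg_of_nonpos hr0 hdv
        have := hc v hv
        simp [hc']; linarith
    have hc'v₁ : c' v₁ = 0 := by
      simp [hc', hr, div_mul_cancel₀ _ hd'v₁.ne']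
    have hsum' : ∑ v ∈ s.erase v₁, c' v • v = ∑ v ∈ s, c v • v := by
      rw [Finset.sum_erase _ (by rw [hc'v₁, zero_smul])]
      simp only [hc', sub_smul, Finset.sum_sub_distrib, mul_smul]
      rw [← Finset.smul_sum, hd'sum, smul_zero, sub_zero]
    obtain ⟨T, hTsub, hTli, hTmem⟩ := ih (s.erase v₁) (Finset.erase_ssubset hv₁s) c'
      (fun v hv => hc'nonneg v (Finset.mem_of_mem_erase hv))
    exact ⟨T, hTsub.trans (Finset.erase_subset _ _), hTli, by rwa [hsum'] at hTmem⟩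

lemma isClosed_coneOf_of_linearIndependent {T : Finset E}
    (h : LinearIndependent ℝ (fun v : T => (v : E))) : IsClosed (coneOf T) := by
  classical
  set L : ({ x // x ∈ T } → ℝ) →ₗ[ℝ] E :=
    (LinearMap.lsum ℝ (fun _ : {x // x ∈ T} => ℝ) ℕ fun i => LinearMap.id.smulRight (i : E)) with hL
  have hLapply : ∀ c : {x // x ∈ T} → ℝ, L c = ∑ i : {x // x ∈ T}, c i • (i : E) := by
    intro c
    simp [hL, LinearMap.lsum_apply]
  have hker : LinearMap.ker L = ⊥ := by
    rw [Fintype.linearIndependent_iff'] at h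
    exact h
  have hemb := LinearMap.isClosedEmbedding_of_injective hker
  have himg : coneOf T = L '' {c | ∀ i, 0 ≤ c i} := by
    ext x
    constructor
    · rintro ⟨c, hc, rfl⟩
      refine ⟨fun i => c i, fun i => hc i i.2, ?_⟩
      rw [hLapply, ← Finset.sum_attach T (fun v => c v • v)]
      rfl
    · rintro ⟨c, hc, rfl⟩
      refine ⟨fun v => if h : v ∈ T then c ⟨v, h⟩ else 0, fun v hv => by simp [hv, hc ⟨v, hv⟩], ?_⟩
      rw [hLapply, ← Finset.sum_attach T]
      exact Finset.sum_congr rfl fun i _ => by simp [i.2]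
  rw [himg]
  refine hemb.isClosedMap _ ?_
  have : {c : {x // x ∈ T} → ℝ | ∀ i, 0 ≤ c i} = ⋂ i, {c | 0 ≤ c i} := Set.setOf_forall _
  rw [this]
  exact isClosed_iInter fun i => isClosed_le continuous_const (continuous_apply i)

lemma isClosed_coneOf (s : Finset E) : IsClosed (coneOf s) := by
  classical
  set S : Set (Finset E) := {T | T ⊆ s ∧ LinearIndependent ℝ (fun v : T => (v : E))} with hS
  have hSfin : S.Finite :=
    Set.Finite.subset (s.powerset.finite_toSet) (fun T hT => by
      simp only [Finset.coe_powerset, Set.mem_preimage, Set.mem_powerset_iff, Finset.coe_subset]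
      exact hT.1)
  have : coneOf s = ⋃ T ∈ S, coneOf T := by
    ext x
    constructor
    · rintro ⟨c, hc, rfl⟩
      obtain ⟨T, hTs, hTli, hmem⟩ := coneOf_caratheodory s c hc
      exact Set.mem_biUnion ⟨hTs, hTli⟩ hmem
    · intro hx
      obtain ⟨T, hT, hmem⟩ := Set.mem_iUnion₂.1 hx
      exact coneOf_mono hT.1 hmem
  rw [this]
  exact hSfin.isClosed_biUnion fun T hT => isClosed_coneOf_of_linearIndependent hT.2

lemma inner_sum_smul_left {T : Finset E} (c : E → ℝ) (u : E) :
    ⟪∑ v ∈ T, c v • v, u⟫ = ∑ v ∈ T, c v * ⟪v, u⟫ := by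
  rw [sum_inner]; exact Finset.sum_congr rfl fun v _ => real_inner_smul_left _ _ _

lemma inner_sum_coneOf {s : Finset E} (c : E → ℝ) (z : E) :
    ⟪z, ∑ v ∈ s, c v • v⟫ = ∑ v ∈ s, c v * ⟪z, v⟫ := by
  simp [inner_sum, real_inner_smul_right]

end General

section Concrete

variable {m : ℕ}

lemma isFaceOf_iff {F σ : Set (EuclideanSpace ℝ (Fin m))} :
    IsFaceOf F σ ↔ ∃ y : EuclideanSpace ℝ (Fin m),
      (∀ x ∈ σ, 0 ≤ (inner ℝ y x : ℝ)) ∧ F = σ ∩ {x | (inner ℝ y x : ℝ) = 0} := by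
  constructor
  · rintro (rfl | h)
    · exact ⟨0, fun x _ => by simp, by simp⟩
    · exact h
  · intro h; exact Or.inr h

lemma dual_dual (s : Finset (EuclideanSpace ℝ (Fin m)))
    (hcc : ∃ K : ConvexCone ℝ (EuclideanSpace ℝ (Fin m)), (K : Set _) = coneOf s)
    (hclosed : IsClosed (coneOf s)) :
    dualCone (dualCone (coneOf s)) = coneOf s := by
  obtain ⟨K, hK⟩ := hcc
  have h1 : ∀ (σ : Set (EuclideanSpace ℝ (Fin m))),
      dualCone σ = (ProperCone.innerDual σ : Set _) := by
    intro σ; ext y; simp [dualCone, ProperCone.mem_innerDual]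
  rw [h1, h1, ← hK]
  have h0 : (0 : EuclideanSpace ℝ (Fin m)) ∈ (K : Set _) := by
    rw [hK]; exact ⟨fun _ => 0, fun _ _ => le_refl 0, by simp⟩
  let C : ProperCone ℝ (EuclideanSpace ℝ (Fin m)) :=
    { carrier := (K : Set _)
      add_mem' := fun ha hb => K.add_mem ha hb
      zero_mem' := h0
      smul_mem' := fun c x hx => by
        by_cases hc : c = 0
        · subst hc; rw [zero_smul]; exact h0
        · change ((c : ℝ) • x) ∈ (K : Set _)
          exact K.smul_mem (NNReal.coe_pos.2 (pos_iff_ne_zero.2 hc)) hx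
      isClosed' := by rw [hK]; exact hclosed }
  have := ProperCone.innerDual_innerDual C
  exact congrArg (fun (D : ProperCone ℝ (EuclideanSpace ℝ (Fin m))) =>
    (D : Set (EuclideanSpace ℝ (Fin m)))) this

/-- A face of a polyhedral cone is the subcone generated by the generators on the hyperplane. -/
lemma face_eq_coneOf_filter (s : Finset (EuclideanSpace ℝ (Fin m)))
    (z : EuclideanSpace ℝ (Fin m)) (hz : ∀ x ∈ coneOf s, 0 ≤ (inner ℝ z x : ℝ)) :
    coneOf s ∩ {x | (inner ℝ z x : ℝ) = 0}
      = coneOf (s.filter fun v => (inner ℝ z v : ℝ) = 0) := by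
  classical
  set T := s.filter (fun v => (inner ℝ z v : ℝ) = 0) with hT
  ext x
  constructor
  · rintro ⟨⟨c, hc, rfl⟩, hx0⟩
    have h0 : ∑ v ∈ s, c v * (inner ℝ z v : ℝ) = 0 := by
      rw [← inner_sum_coneOf c z]; exact hx0
    have hterm : ∀ v ∈ s, c v * (inner ℝ z v : ℝ) = 0 := by
      rw [← Finset.sum_eq_zero_iff_of_nonneg
        (fun v hv => mul_nonneg (hc v hv) (hz v (mem_coneOf_self hv)))]
      exact h0
    refine ⟨c, fun v hv => hc v (Finset.mem_of_mem_filter v hv), ?_⟩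
    refine (Finset.sum_subset (Finset.filter_subset _ s) fun v hv hvT => ?_).symm
    have hzv : (inner ℝ z v : ℝ) ≠ 0 := by
      intro h; exact hvT (Finset.mem_filter.2 ⟨hv, h⟩)
    have : c v = 0 := by
      rcases mul_eq_zero.1 (hterm v hv) with h | h
      · exact h
      · exact absurd h hzv
    rw [this, zero_smul]
  · rintro ⟨c, hc, rfl⟩
    refine ⟨coneOf_mono (Finset.filter_subset _ s) ⟨c, hc, rfl⟩, ?_⟩
    show (inner ℝ z (∑ v ∈ T, c v • v) : ℝ) = 0
    rw [inner_sum_coneOf]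
    exact Finset.sum_eq_zero fun v hv => by
      rw [(Finset.mem_filter.1 hv).2, mul_zero]


lemma star_isFace (s : Finset (EuclideanSpace ℝ (Fin m))) {τ : Set (EuclideanSpace ℝ (Fin m))}
    (hτ : IsFaceOf τ (coneOf s)) :
    IsFaceOf (dualCone (coneOf s) ∩ perpSet τ) (dualCone (coneOf s)) := by
  classical
  obtain ⟨z, hz, rfl⟩ := isFaceOf_iff.1 hτ
  rw [face_eq_coneOf_filter s z hz]
  set T := s.filter (fun v => (inner ℝ z v : ℝ) = 0) with hT
  set w := ∑ v ∈ T, v with hw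
  have hwσ : w ∈ coneOf s := coneOf_mono (Finset.filter_subset _ s) sum_mem_coneOf
  refine Or.inr ⟨w, fun u hu => hu w hwσ, ?_⟩
  ext u
  constructor
  · rintro ⟨hu, hperp⟩
    exact ⟨hu, hperp w sum_mem_coneOf⟩
  · rintro ⟨hu, hwu⟩
    refine ⟨hu, ?_⟩
    have hgen : ∀ v ∈ T, (inner ℝ v u : ℝ) = 0 := by
      have hsum : ∑ v ∈ T, (inner ℝ v u : ℝ) = 0 := by
        rw [← sum_inner]
        exact hwu
      rw [← Finset.sum_eq_zero_iff_of_nonneg (fun v hv =>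
        hu v (coneOf_mono (Finset.filter_subset _ s) (mem_coneOf_self hv)))]
      exact hsum
    rintro x ⟨c, hc, rfl⟩
    rw [show (inner ℝ (∑ v ∈ T, c v • v) u : ℝ) = ∑ v ∈ T, c v * (inner ℝ v u : ℝ) from
      inner_sum_smul_left c u]
    exact Finset.sum_eq_zero fun v hv => by rw [hgen v hv, mul_zero]

lemma star_recover (s : Finset (EuclideanSpace ℝ (Fin m))) {τ : Set (EuclideanSpace ℝ (Fin m))}
    (hτ : IsFaceOf τ (coneOf s)) :
    coneOf s ∩ perpSet (dualCone (coneOf s) ∩ perpSet τ) = τ := by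
  obtain ⟨z, hz, rfl⟩ := isFaceOf_iff.1 hτ
  ext x
  constructor
  · rintro ⟨hxσ, hx⟩
    refine ⟨hxσ, ?_⟩
    have hzmem : z ∈ dualCone (coneOf s) ∩ perpSet (coneOf s ∩ {x | (inner ℝ z x : ℝ) = 0}) := by
      refine ⟨fun y hy => by rw [real_inner_comm]; exact hz y hy, ?_⟩
      rintro y ⟨hy1, hy2⟩
      rw [real_inner_comm]; exact hy2
    exact hx z hzmem
  · rintro ⟨hxσ, hxz⟩
    refine ⟨hxσ, ?_⟩
    rintro u ⟨hu1, hu2⟩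
    rw [real_inner_comm]
    exact hu2 x ⟨hxσ, hxz⟩

lemma exists_face_star (s : Finset (EuclideanSpace ℝ (Fin m)))
    {F : Set (EuclideanSpace ℝ (Fin m))} (hF : IsFaceOf F (dualCone (coneOf s))) :
    ∃ τ : Set (EuclideanSpace ℝ (Fin m)),
      IsFaceOf τ (coneOf s) ∧ dualCone (coneOf s) ∩ perpSet τ = F := by
  classical
  obtain ⟨y, hy, rfl⟩ := isFaceOf_iff.1 hF
  set F := dualCone (coneOf s) ∩ {x | (inner ℝ y x : ℝ) = 0} with hF2
  have hyσ : y ∈ coneOf s := by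
    rw [← dual_dual s ⟨coneOfCC s, rfl⟩ (isClosed_coneOf s)]
    intro z hz
    rw [real_inner_comm]
    exact hy z hz
  have h0F : (0 : EuclideanSpace ℝ (Fin m)) ∈ F :=
    ⟨fun x _ => by simp, by simp⟩
  have haddF : ∀ z₁ z₂, z₁ ∈ F → z₂ ∈ F → z₁ + z₂ ∈ F := by
    rintro z₁ z₂ ⟨h₁d, h₁p⟩ ⟨h₂d, h₂p⟩
    refine ⟨fun x hx => ?_, ?_⟩
    · rw [inner_add_right]; exact add_nonneg (h₁d x hx) (h₂d x hx)
    · show (inner ℝ y (z₁ + z₂) : ℝ) = 0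
      rw [inner_add_right, h₁p, h₂p, add_zero]
  -- pick for each generator a witness in F not orthogonal to it, if one exists
  set g : EuclideanSpace ℝ (Fin m) → EuclideanSpace ℝ (Fin m) :=
    fun v => if h : ∃ z ∈ F, (inner ℝ v z : ℝ) ≠ 0 then h.choose else 0 with hg
  have hgF : ∀ v, g v ∈ F := by
    intro v
    rw [hg]; dsimp only
    split
    · next h => exact h.choose_spec.1
    · exact h0F
  have hgne : ∀ v, (∃ z ∈ F, (inner ℝ v z : ℝ) ≠ 0) → (inner ℝ v (g v) : ℝ) ≠ 0 := by
    intro v h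
    rw [hg]; dsimp only
    rw [dif_pos h]
    exact h.choose_spec.2
  set w := ∑ v ∈ s, g v with hw
  have hwF : w ∈ F := Finset.sum_induction g (· ∈ F) haddF h0F (fun v _ => hgF v)
  -- key property of w
  have hkey : ∀ v ∈ s, (inner ℝ v w : ℝ) = 0 → ∀ z ∈ F, (inner ℝ v z : ℝ) = 0 := by
    intro v hv hvw
    have hterm : ∀ v' ∈ s, (inner ℝ v (g v') : ℝ) = 0 := by
      have hsum : ∑ v' ∈ s, (inner ℝ v (g v') : ℝ) = 0 := by
        rw [← inner_sum]
        exact hvw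
      rw [← Finset.sum_eq_zero_iff_of_nonneg (fun v' _ =>
        (hgF v').1 v (mem_coneOf_self hv))]
      exact hsum
    by_contra h
    push_neg at h
    obtain ⟨z, hzF, hzne⟩ := h
    exact hgne v ⟨z, hzF, hzne⟩ (hterm v hv)
  set τ := coneOf s ∩ perpSet F with hτd
  have hτface : τ = coneOf s ∩ {x | (inner ℝ w x : ℝ) = 0} := by
    ext x
    constructor
    · rintro ⟨hxσ, hxp⟩
      exact ⟨hxσ, hxp w hwF⟩
    · rintro ⟨hxσ, hxw⟩
      refine ⟨hxσ, ?_⟩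
      obtain ⟨c, hc, rfl⟩ := hxσ
      have hx2 : ∑ v ∈ s, c v * (inner ℝ v w : ℝ) = 0 := by
        rw [← inner_sum_smul_left c w, real_inner_comm]
        exact hxw
      have hterm : ∀ v ∈ s, c v * (inner ℝ v w : ℝ) = 0 := by
        rw [← Finset.sum_eq_zero_iff_of_nonneg (fun v hv =>
          mul_nonneg (hc v hv) (hwF.1 v (mem_coneOf_self hv)))]
        exact hx2
      rintro u huF
      rw [show (inner ℝ u (∑ v ∈ s, c v • v) : ℝ) = ∑ v ∈ s, c v * (inner ℝ u v : ℝ) from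
        inner_sum_coneOf c u]
      refine Finset.sum_eq_zero fun v hv => ?_
      rcases mul_eq_zero.1 (hterm v hv) with h | h
      · rw [h, zero_mul]
      · rw [real_inner_comm v u, hkey v hv h u huF, mul_zero]
  refine ⟨τ, Or.inr ⟨w, fun x hx => by rw [real_inner_comm]; exact hwF.1 x hx, hτface⟩, ?_⟩
  ext z
  constructor
  · rintro ⟨hzd, hzp⟩
    have hyτ : y ∈ τ := by
      refine ⟨hyσ, ?_⟩
      rintro u ⟨hu1, hu2⟩
      rw [real_inner_comm]
      exact hu2
    exact ⟨hzd, hzp y hyτ⟩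
  · rintro ⟨hzd, hzy⟩
    refine ⟨hzd, ?_⟩
    rintro x ⟨hxσ, hxp⟩
    rw [real_inner_comm]
    exact hxp z ⟨hzd, hzy⟩

lemma stmt_0_main (s : Finset (EuclideanSpace ℝ (Fin m))) :
    Set.BijOn (fun τ => dualCone (coneOf s) ∩ perpSet τ)
      {τ | IsFaceOf τ (coneOf s)} {τ' | IsFaceOf τ' (dualCone (coneOf s))} ∧
    (∀ τ₁ τ₂ : Set (EuclideanSpace ℝ (Fin m)),
      IsFaceOf τ₁ (coneOf s) → IsFaceOf τ₂ (coneOf s) →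
      (τ₁ ⊆ τ₂ ↔ dualCone (coneOf s) ∩ perpSet τ₂ ⊆ dualCone (coneOf s) ∩ perpSet τ₁)) := by
  have horder : ∀ τ₁ τ₂ : Set (EuclideanSpace ℝ (Fin m)),
      IsFaceOf τ₁ (coneOf s) → IsFaceOf τ₂ (coneOf s) →
      (τ₁ ⊆ τ₂ ↔ dualCone (coneOf s) ∩ perpSet τ₂ ⊆ dualCone (coneOf s) ∩ perpSet τ₁) := by
    intro τ₁ τ₂ h₁ h₂
    constructor
    · rintro hsub u ⟨hu, hup⟩
      exact ⟨hu, fun x hx => hup x (hsub hx)⟩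
    · intro hsub
      rw [← star_recover s h₁, ← star_recover s h₂]
      rintro x ⟨hxσ, hxp⟩
      exact ⟨hxσ, fun u hu => hxp u (hsub hu)⟩
  refine ⟨⟨fun τ hτ => star_isFace s hτ, fun τ₁ h₁ τ₂ h₂ himg => ?_, fun F hF => ?_⟩, horder⟩
  · rw [← star_recover s h₁, ← star_recover s h₂]
    dsimp only at himg
    rw [himg]
  · obtain ⟨τ, hτ, hτF⟩ := exists_face_star s hF
    exact ⟨τ, hτ, hτF⟩

theorem stmt_0 {m : ℕ} (σ : Set (EuclideanSpace ℝ (Fin m)))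
    (hσ : IsPolyhedralCone σ) :
    Set.BijOn (fun τ => dualCone σ ∩ perpSet τ)
      {τ | IsFaceOf τ σ} {τ' | IsFaceOf τ' (dualCone σ)} ∧
    (∀ τ₁ τ₂ : Set (EuclideanSpace ℝ (Fin m)), IsFaceOf τ₁ σ → IsFaceOf τ₂ σ →
      (τ₁ ⊆ τ₂ ↔ dualCone σ ∩ perpSet τ₂ ⊆ dualCone σ ∩ perpSet τ₁)) := by
  obtain ⟨s, rfl⟩ := hσ
  exact stmt_0_main s

end Concrete
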